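/- Suppose that for all finite simple graphs G and H without isolated vertices, all canonical minimum dominating sets D_G ⊆ V(G), D_H ⊆ V(H), and all adjacency-respecting surjections F_G : V(G) − D_G → D_G and F_H : V(H) − D_H → D_H, the set D_G × D_H is a minimum dominating set of the adjoint graph A_{G,H}[F_G,F_H]. Then Vizing's conjecture holds: γ(G)·γ(H) ≤ γ(G□H) for all finite simple graphs G and H without isolated vertices. -/

import Mathlib

/-- `D` is a dominating set of `G`: every vertex outside `D` has a neighbor in `D`. -/
def Dominates {α : Type*} (G : SimpleGraph α) (D : Finset α) : Prop :=
  ∀ v ∉ D, ∃ u ∈ D, G.Adj u v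

/-- The domination number `γ(G)`: the minimum cardinality of a dominating set. -/
noncomputable def gamma {α : Type*} (G : SimpleGraph α) : ℕ :=
  sInf {n : ℕ | ∃ D : Finset α, Dominates G D ∧ D.card = n}

/-- `v` is a private neighbor of `u` with respect to `D`:
`v ∉ D`, `u ∼ v`, and `N(v) ∩ D = {u}`. -/
def PrivateNbr {α : Type*} (G : SimpleGraph α) (D : Finset α) (u v : α) : Prop :=
  v ∉ D ∧ G.Adj u v ∧ ∀ w ∈ D, G.Adj w v → w = u

/-- `D` is canonical: every member of `D` has at least one private neighbor. -/
def Canonical {α : Type*} (G : SimpleGraph α) (D : Finset α) : Prop :=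
  ∀ u ∈ D, ∃ v, PrivateNbr G D u v

/-- The map `S` on `V(G □ H) − D_G × D_H`:
`S(u,v) = (u, F_H v)` if `u ∈ D_G` (and then necessarily `v ∉ D_H`),
`S(u,v) = (F_G u, v)` if `u ∉ D_G` and `v ∈ D_H`, and
`S(u,v) = (F_G u, F_H v)` if `u ∉ D_G` and `v ∉ D_H`. -/
def Svert {α β : Type*} [DecidableEq α] [DecidableEq β] (DG : Finset α) (DH : Finset β)
    (FG : α → α) (FH : β → β) (p : α × β) : α × β :=
  if p.1 ∈ DG then (p.1, FH p.2)
  else if p.2 ∈ DH then (FG p.1, p.2)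
  else (FG p.1, FH p.2)

/-- The adjoint graph `A_{G,H}[F_G,F_H]`: the Cartesian product `G □ H` together with the
added edges `E_S = {{(u,v), (F_G u, F_H v)} : u ∉ D_G, v ∉ D_H}`. -/
def adjointGraph {α β : Type*} (G : SimpleGraph α) (H : SimpleGraph β)
    (DG : Finset α) (DH : Finset β) (FG : α → α) (FH : β → β) : SimpleGraph (α × β) :=
  G.boxProd H ⊔ SimpleGraph.fromRel (fun p q => p.1 ∉ DG ∧ p.2 ∉ DH ∧ q = (FG p.1, FH p.2))

lemma gamma_mem {α : Type*} [Fintype α] (G : SimpleGraph α) :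
    ∃ D : Finset α, Dominates G D ∧ D.card = gamma G := by
  have hne : {n : ℕ | ∃ D : Finset α, Dominates G D ∧ D.card = n}.Nonempty :=
    ⟨(Finset.univ : Finset α).card, Finset.univ,
      fun v hv => absurd (Finset.mem_univ v) hv, rfl⟩
  obtain ⟨D, hD, hcard⟩ := Nat.sInf_mem hne
  exact ⟨D, hD, hcard⟩

lemma gamma_le {α : Type*} (G : SimpleGraph α) {D : Finset α} (h : Dominates G D) :
    gamma G ≤ D.card := Nat.sInf_le ⟨D, h, rfl⟩

lemma exists_canonical_min {α : Type*} [Fintype α] (G : SimpleGraph α)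
    (hiso : ∀ v : α, ∃ w, G.Adj v w) :
    ∃ D : Finset α, Dominates G D ∧ Canonical G D ∧ D.card = gamma G := by
  classical
  set Φ : Finset α → ℕ := fun D => ((D ×ˢ D).filter (fun p => G.Adj p.1 p.2)).card with hΦ
  set S : Finset (Finset α) :=
    Finset.univ.filter (fun D => Dominates G D ∧ D.card = gamma G) with hS
  have hSne : S.Nonempty := by
    obtain ⟨D, h1, h2⟩ := gamma_mem G
    exact ⟨D, by simp [hS, h1, h2]⟩
  obtain ⟨D, hDS, hmax⟩ := S.exists_max_image Φ hSne
  have hD : Dominates G D ∧ D.card = gamma G := by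
    have := hDS; rw [hS, Finset.mem_filter] at this; exact this.2
  obtain ⟨hdom, hcard⟩ := hD
  refine ⟨D, hdom, ?_, hcard⟩
  intro u hu
  by_contra hno
  push_neg at hno
  -- every neighbor of u outside D has another dominator
  have hpriv : ∀ v, v ∉ D → G.Adj u v → ∃ z ∈ D, G.Adj z v ∧ z ≠ u := by
    intro v hv hadj
    have := hno v
    rw [PrivateNbr] at this
    push_neg at this
    obtain ⟨z, hz, hza, hzu⟩ := this hv hadj
    exact ⟨z, hz, hza, hzu⟩
  have hγpos : 1 ≤ D.card := Finset.card_pos.mpr ⟨u, hu⟩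
  by_cases hin : ∃ w ∈ D, G.Adj w u
  · -- D.erase u is a smaller dominating set, contradiction
    obtain ⟨w, hw, hwu⟩ := hin
    have hwu' : w ≠ u := G.ne_of_adj hwu
    have hdom' : Dominates G (D.erase u) := by
      intro v hv
      by_cases hvu : v = u
      · exact ⟨w, Finset.mem_erase.mpr ⟨hwu', hw⟩, hvu ▸ hwu⟩
      · have hvD : v ∉ D := fun h => hv (Finset.mem_erase.mpr ⟨hvu, h⟩)
        obtain ⟨y, hy, hyv⟩ := hdom v hvD
        by_cases hyu : y = u
        · obtain ⟨z, hz, hzv, hzu⟩ := hpriv v hvD (hyu ▸ hyv)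
          exact ⟨z, Finset.mem_erase.mpr ⟨hzu, hz⟩, hzv⟩
        · exact ⟨y, Finset.mem_erase.mpr ⟨hyu, hy⟩, hyv⟩
    have := gamma_le G hdom'
    rw [Finset.card_erase_of_mem hu] at this
    omega
  · -- u has no neighbor in D; swap u for a neighbor w ∉ D
    push_neg at hin
    obtain ⟨w, huw⟩ := hiso u
    have hwD : w ∉ D := fun h => hin w h huw.symm
    have hwu : w ≠ u := fun h => G.loopless.irrefl u (h ▸ huw.symm)
    have huE : u ∉ D.erase u := Finset.notMem_erase u D
    have hwE : w ∉ D.erase u := fun h => hwD (Finset.mem_of_mem_erase h)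
    set D' := insert w (D.erase u) with hD'
    have huD' : u ∉ D' := by
      rw [hD', Finset.mem_insert]
      rintro (h | h)
      · exact hwu h.symm
      · exact huE h
    have hcard' : D'.card = D.card := by
      rw [hD', Finset.card_insert_of_notMem hwE, Finset.card_erase_of_mem hu]
      omega
    have hdom' : Dominates G D' := by
      intro v hv
      by_cases hvu : v = u
      · exact ⟨w, Finset.mem_insert_self _ _, hvu ▸ huw.symm⟩
      · have hvD : v ∉ D := by
          intro h
          exact hv (Finset.mem_insert_of_mem (Finset.mem_erase.mpr ⟨hvu, h⟩))
        obtain ⟨y, hy, hyv⟩ := hdom v hvD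
        by_cases hyu : y = u
        · obtain ⟨z, hz, hzv, hzu⟩ := hpriv v hvD (hyu ▸ hyv)
          exact ⟨z, Finset.mem_insert_of_mem (Finset.mem_erase.mpr ⟨hzu, hz⟩), hzv⟩
        · exact ⟨y, Finset.mem_insert_of_mem (Finset.mem_erase.mpr ⟨hyu, hy⟩), hyv⟩
    have hD'S : D' ∈ S := by
      rw [hS, Finset.mem_filter]
      exact ⟨Finset.mem_univ _, hdom', by rw [hcard', hcard]⟩
    -- Φ D = Φ (D.erase u) since u has no neighbors inside D
    have hfe : (D ×ˢ D).filter (fun p => G.Adj p.1 p.2)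
        = ((D.erase u) ×ˢ (D.erase u)).filter (fun p => G.Adj p.1 p.2) := by
      ext p
      simp only [Finset.mem_filter, Finset.mem_product, Finset.mem_erase]
      constructor
      · rintro ⟨⟨h1, h2⟩, h3⟩
        refine ⟨⟨⟨?_, h1⟩, ⟨?_, h2⟩⟩, h3⟩
        · rintro rfl; exact hin p.2 h2 h3.symm
        · rintro rfl; exact hin p.1 h1 h3
      · rintro ⟨⟨⟨_, h1⟩, ⟨_, h2⟩⟩, h3⟩
        exact ⟨⟨h1, h2⟩, h3⟩
    -- strict inclusion into the filter for D'
    obtain ⟨z, hz, hzw, hzu⟩ := hpriv w hwD huw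
    have hzE : z ∈ D.erase u := Finset.mem_erase.mpr ⟨hzu, hz⟩
    have hssub : ((D.erase u) ×ˢ (D.erase u)).filter (fun p => G.Adj p.1 p.2)
        ⊂ (D' ×ˢ D').filter (fun p => G.Adj p.1 p.2) := by
      refine Finset.ssubset_iff_of_subset ?_ |>.mpr ?_
      · intro p hp
        simp only [Finset.mem_filter, Finset.mem_product] at hp ⊢
        exact ⟨⟨Finset.mem_insert_of_mem hp.1.1, Finset.mem_insert_of_mem hp.1.2⟩, hp.2⟩
      · refine ⟨(z, w), ?_, ?_⟩
        · simp only [Finset.mem_filter, Finset.mem_product]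
          exact ⟨⟨Finset.mem_insert_of_mem hzE, Finset.mem_insert_self _ _⟩, hzw⟩
        · simp only [Finset.mem_filter, Finset.mem_product]
          rintro ⟨⟨_, h2⟩, _⟩
          exact hwE h2
    have hlt : Φ D < Φ D' := by
      rw [hΦ]; dsimp only
      rw [hfe]
      exact Finset.card_lt_card hssub
    exact absurd (hmax D' hD'S) (by omega)

lemma exists_F {α : Type*} (G : SimpleGraph α) (D : Finset α)
    (hdom : Dominates G D) (hcan : Canonical G D) :
    ∃ F : α → α, (∀ v ∉ D, F v ∈ D ∧ G.Adj (F v) v) ∧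
      (∀ w ∈ D, ∃ v, v ∉ D ∧ F v = w) := by
  classical
  -- choose a private neighbor for each vertex of D
  set p : α → α := fun u => if h : ∃ v, PrivateNbr G D u v then h.choose else u with hp'
  have hp : ∀ u ∈ D, PrivateNbr G D u (p u) := by
    intro u hu
    have h := hcan u hu
    rw [hp']; dsimp only; rw [dif_pos h]
    exact h.choose_spec
  refine ⟨fun v =>
    if h : ∃ w, w ∈ D ∧ p w = v then h.choose
    else if h2 : ∃ z, z ∈ D ∧ G.Adj z v then h2.choose else v, ?_, ?_⟩
  · intro v hv
    dsimp only
    by_cases h : ∃ w, w ∈ D ∧ p w = v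
    · rw [dif_pos h]
      obtain ⟨hw, hpw⟩ := h.choose_spec
      have := hp _ hw
      rw [hpw] at this
      exact ⟨hw, this.2.1⟩
    · rw [dif_neg h]
      obtain ⟨z, hz, hzv⟩ := hdom v hv
      have h2 : ∃ z, z ∈ D ∧ G.Adj z v := ⟨z, hz, hzv⟩
      rw [dif_pos h2]
      exact h2.choose_spec
  · intro w hw
    have hpriv := hp w hw
    refine ⟨p w, hpriv.1, ?_⟩
    dsimp only
    have h : ∃ w', w' ∈ D ∧ p w' = p w := ⟨w, hw, rfl⟩
    rw [dif_pos h]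
    obtain ⟨hw', hpw'⟩ := h.choose_spec
    -- uniqueness of the dominator of a private neighbor
    have hadj : G.Adj h.choose (p w) := by
      have := hp _ hw'
      rw [hpw'] at this
      exact this.2.1
    exact hpriv.2.2 _ hw' hadj

/-- If, for all graphs `G`, `H` without isolated vertices, all canonical minimum dominating
sets `D_G`, `D_H` and all adjacency-respecting surjections `F_G`, `F_H`, the set
`D_G × D_H` is a minimum dominating set of the adjoint graph `A_{G,H}[F_G,F_H]`, then
Vizing's conjecture holds: `γ(G)·γ(H) ≤ γ(G □ H)`. -/
theorem vizing_of_conjecture.{u}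
    (hyp : ∀ (α β : Type u) [Fintype α] [Fintype β] [DecidableEq α] [DecidableEq β]
      (G : SimpleGraph α) (H : SimpleGraph β),
      (∀ v : α, ∃ w : α, G.Adj v w) → (∀ v : β, ∃ w : β, H.Adj v w) →
      ∀ (DG : Finset α) (DH : Finset β),
        Dominates G DG → Dominates H DH →
        Canonical G DG → Canonical H DH →
        DG.card = gamma G → DH.card = gamma H →
        ∀ (FG : α → α) (FH : β → β),
          (∀ u ∉ DG, FG u ∈ DG ∧ G.Adj (FG u) u) →
          (∀ w ∈ DG, ∃ u, u ∉ DG ∧ FG u = w) →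
          (∀ v ∉ DH, FH v ∈ DH ∧ H.Adj (FH v) v) →
          (∀ w ∈ DH, ∃ v, v ∉ DH ∧ FH v = w) →
          Dominates (adjointGraph G H DG DH FG FH) (DG ×ˢ DH) ∧
            gamma (adjointGraph G H DG DH FG FH) = (DG ×ˢ DH).card) :
    ∀ (α β : Type u) [Fintype α] [Fintype β] (G : SimpleGraph α) (H : SimpleGraph β),
      (∀ v : α, ∃ w : α, G.Adj v w) → (∀ v : β, ∃ w : β, H.Adj v w) →
      gamma G * gamma H ≤ gamma (G.boxProd H) := by
  intro α β _ _ G H hG hH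
  classical
  obtain ⟨DG, hDGdom, hDGcan, hDGcard⟩ := exists_canonical_min G hG
  obtain ⟨DH, hDHdom, hDHcan, hDHcard⟩ := exists_canonical_min H hH
  obtain ⟨FG, hFG1, hFG2⟩ := exists_F G DG hDGdom hDGcan
  obtain ⟨FH, hFH1, hFH2⟩ := exists_F H DH hDHdom hDHcan
  obtain ⟨-, hgadj⟩ := hyp α β G H hG hH DG DH hDGdom hDHdom hDGcan hDHcan
    hDGcard hDHcard FG FH hFG1 hFG2 hFH1 hFH2
  obtain ⟨D, hDdom, hDcard⟩ := gamma_mem (G.boxProd H)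
  have hdom' : Dominates (adjointGraph G H DG DH FG FH) D := by
    intro v hv
    obtain ⟨u, hu, hadj⟩ := hDdom v hv
    exact ⟨u, hu, Or.inl hadj⟩
  have h1 : gamma (adjointGraph G H DG DH FG FH) ≤ gamma (G.boxProd H) := by
    have := gamma_le _ hdom'
    omega
  calc gamma G * gamma H = (DG ×ˢ DH).card := by
        rw [Finset.card_product, hDGcard, hDHcard]
    _ = gamma (adjointGraph G H DG DH FG FH) := hgadj.symm
    _ ≤ gamma (G.boxProd H) := h1
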